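/- Let A be a commutative ring, f₀,…,f_r ∈ A, and S = ⊕_{d≥0} a^d the Rees algebra of the ideal a = (f₀,…,f_r). For each i, the degree-0 part of the homogeneous localization S_{(f_i)} has no f_i-torsion: multiplication by f_i is injective on S_{(f_i)}. -/

import Mathlib

/-- The natural grading of the Rees algebra `S = ⊕_{n≥0} 𝔞ⁿ tⁿ ⊆ A[t]`: the degree-`n`
piece consists of the monomials `a tⁿ` with `a ∈ 𝔞ⁿ`. -/
noncomputable def reesGrading {A : Type*} [CommRing A] (𝔞 : Ideal A) :
    ℕ → Submodule A ↥(reesAlgebra 𝔞) := fun n =>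
  Submodule.comap (reesAlgebra 𝔞).val.toLinearMap
    (Submodule.map (Polynomial.monomial n : A →ₗ[A] Polynomial A) (𝔞 ^ n))

/-- An element `g ∈ 𝔞` regarded as the degree-one element `g·t` of the Rees algebra. -/
noncomputable def reesDeg1 {A : Type*} [CommRing A] (𝔞 : Ideal A) (g : A) (hg : g ∈ 𝔞) :
    ↥(reesAlgebra 𝔞) :=
  ⟨Polynomial.monomial 1 g, reesAlgebra.monomial_mem.mpr (by simpa using hg)⟩

/-- An element `g ∈ A` regarded as a degree-zero element of the Rees algebra. -/
noncomputable def reesDeg0 {A : Type*} [CommRing A] (𝔞 : Ideal A) (g : A) :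
    ↥(reesGrading 𝔞 0) :=
  ⟨⟨Polynomial.monomial 0 g, reesAlgebra.monomial_mem.mpr (by simp)⟩,
    Submodule.mem_comap.mpr ⟨g, by simp, rfl⟩⟩

/-- Multiplication by the constant `g` kills nothing in `Localization.Away (g·t)`. -/
lemma rees_aux {A : Type*} [CommRing A] (𝔞 : Ideal A) (g : A) (hg : g ∈ 𝔞)
    (u : Localization.Away (reesDeg1 𝔞 g hg))
    (hu : algebraMap (reesAlgebra 𝔞) _
        ((reesDeg0 𝔞 g : ↥(reesGrading 𝔞 0)) : reesAlgebra 𝔞) * u = 0) :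
    u = 0 := by
  obtain ⟨⟨s, d⟩, hsd : IsLocalization.mk' _ s d = u⟩ :=
    IsLocalization.mk'_surjective (Submonoid.powers (reesDeg1 𝔞 g hg)) u
  rw [← hsd, IsLocalization.mul_mk'_eq_mk'_of_mul, IsLocalization.mk'_eq_zero_iff] at hu
  obtain ⟨m, hm⟩ := hu
  obtain ⟨k, hk⟩ := m.2
  have hpoly : (Polynomial.monomial k ((g : A) ^ (k + 1)) : Polynomial A)
      * (s : Polynomial A) = 0 := by
    have h := congrArg Subtype.val hm
    rw [← hk] at h
    simpa [reesDeg1, reesDeg0, Polynomial.monomial_pow, Polynomial.monomial_mul_monomial,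
      mul_assoc, pow_succ, mul_comm, mul_left_comm] using h
  have hkey : (Polynomial.C ((g : A) ^ (k + 1)) : Polynomial A) * (s : Polynomial A) = 0 := by
    have h2 : (Polynomial.X ^ k : Polynomial A)
        * (Polynomial.C (g ^ (k + 1)) * (s : Polynomial A)) = 0 := by
      rw [← Polynomial.C_mul_X_pow_eq_monomial] at hpoly
      calc (Polynomial.X ^ k : Polynomial A) * (Polynomial.C (g ^ (k + 1)) * (s : Polynomial A))
          = Polynomial.C (g ^ (k + 1)) * Polynomial.X ^ k * (s : Polynomial A) := by ring
        _ = 0 := hpoly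
    exact ((Polynomial.monic_X_pow k).mul_right_eq_zero_iff).mp h2
  have hS : (reesDeg1 𝔞 g hg) ^ (k + 1) * s = 0 := by
    apply Subtype.ext
    show ((reesDeg1 𝔞 g hg) ^ (k + 1) * s : reesAlgebra 𝔞).1 = (0 : Polynomial A)
    have hpow : (((reesDeg1 𝔞 g hg) : reesAlgebra 𝔞) ^ (k + 1)).1
        = Polynomial.monomial (k + 1) (g ^ (k + 1)) := by
      simp [reesDeg1, Polynomial.monomial_pow, one_mul]
    rw [Subalgebra.coe_mul, hpow, ← Polynomial.C_mul_X_pow_eq_monomial]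
    calc Polynomial.C (g ^ (k + 1)) * Polynomial.X ^ (k + 1) * (s : Polynomial A)
        = Polynomial.X ^ (k + 1) * (Polynomial.C (g ^ (k + 1)) * (s : Polynomial A)) := by ring
      _ = 0 := by rw [hkey, mul_zero]
  rw [← hsd, IsLocalization.mk'_eq_zero_iff]
  exact ⟨⟨(reesDeg1 𝔞 g hg) ^ (k + 1), ⟨k + 1, rfl⟩⟩, hS⟩

/-- The value of the structure map `𝒜 0 → S_{(x)}` in the ordinary localization. -/
lemma rees_algebraMap_val {A : Type*} [CommRing A] (𝔞 : Ideal A)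
    [GradedAlgebra (reesGrading 𝔞)] (x : ↥(reesAlgebra 𝔞))
    (g : ↥(reesGrading 𝔞 0)) :
    ((algebraMap ↥(reesGrading 𝔞 0)
        (HomogeneousLocalization.Away (reesGrading 𝔞) x) :
        ↥(reesGrading 𝔞 0) →+* HomogeneousLocalization.Away (reesGrading 𝔞) x) g).val
      = algebraMap (reesAlgebra 𝔞) (Localization.Away x) (g : reesAlgebra 𝔞) := by
  rw [HomogeneousLocalization.algebraMap_eq]
  show (HomogeneousLocalization.mk ⟨0, g, 1, one_mem _⟩).val = _
  rw [HomogeneousLocalization.val_mk]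
  exact Localization.mk_one_eq_algebraMap _

/-- For the Rees algebra `S = ⊕_{d≥0} 𝔞^d` of `𝔞 = (f₀, …, f_r)`, the degree-zero part
`S_{(f_i)}` of the homogeneous localization at the degree-one element `f_i t` has no
`f_i`-torsion: multiplication by `f_i` is injective on `S_{(f_i)}`. -/
theorem rees_homogeneousLocalization_away_no_torsion
    (A : Type*) [CommRing A] {r : ℕ} (f : Fin (r + 1) → A) (i : Fin (r + 1))
    [GradedAlgebra (reesGrading (Ideal.span (Set.range f)))] :
    Function.Injective
      (fun s : HomogeneousLocalization.Away (reesGrading (Ideal.span (Set.range f)))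
          (reesDeg1 (Ideal.span (Set.range f)) (f i) (Ideal.subset_span ⟨i, rfl⟩)) =>
        (algebraMap ↥(reesGrading (Ideal.span (Set.range f)) 0)
          (HomogeneousLocalization.Away (reesGrading (Ideal.span (Set.range f)))
            (reesDeg1 (Ideal.span (Set.range f)) (f i) (Ideal.subset_span ⟨i, rfl⟩))) :
          ↥(reesGrading (Ideal.span (Set.range f)) 0) →+*
            HomogeneousLocalization.Away (reesGrading (Ideal.span (Set.range f)))
              (reesDeg1 (Ideal.span (Set.range f)) (f i) (Ideal.subset_span ⟨i, rfl⟩)))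
          (reesDeg0 (Ideal.span (Set.range f)) (f i)) * s) := by
  intro s t h
  apply HomogeneousLocalization.val_injective
  have h' := congrArg HomogeneousLocalization.val h
  simp only [HomogeneousLocalization.val_mul, rees_algebraMap_val] at h'
  have := rees_aux (Ideal.span (Set.range f)) (f i) (Ideal.subset_span ⟨i, rfl⟩)
    (s.val - t.val) (by
      exact (mul_sub (algebraMap (reesAlgebra (Ideal.span (Set.range f)))
        (Localization.Away (reesDeg1 (Ideal.span (Set.range f)) (f i)
          (Ideal.subset_span ⟨i, rfl⟩)))
        ((reesDeg0 (Ideal.span (Set.range f)) (f i) :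
          ↥(reesGrading (Ideal.span (Set.range f)) 0)) :
            reesAlgebra (Ideal.span (Set.range f)))) s.val t.val).trans
        (sub_eq_zero.mpr h'))
  exact sub_eq_zero.mp this
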